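/- Let G be embedded in G⁰(2) as above with G⁰ acting freely on a set C. Suppose K is a subgroup of G⁰ normal in G containing all elements of G⁰ fixing a point of C (vacuously, K normal in G suffices since the action is free), the commutator subgroup, and all g·Ad_{τ'}(g). Then every element of G⁰(2) fixing some point of C × C lies in G_K. In particular, if (g,h) ∈ G⁰ × G⁰ fixes a point of C × C then g = h = 1, and if τ'(g,h) fixes a point then τ'(g,h) ∈ K × K · {1, σ-part} ⊆ G_K. -/

import Mathlib

open Subgroup

/-- The swap automorphism of `G × G`. -/
def swapAut (G : Type*) [Group G] : MulAut (G × G) :=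
  (MulEquiv.prodComm : G × G ≃* G × G)

/-- The order-two subgroup of `MulAut (G × G)` generated by the swap. -/
abbrev swapZ2 (G : Type*) [Group G] : Subgroup (MulAut (G × G)) :=
  Subgroup.zpowers (swapAut G)

/-- The group `G(2) = (G × G) ⋊ ℤ/2ℤ` (with the swap action). -/
abbrev Gtwo (G : Type*) [Group G] :=
  SemidirectProduct (G × G) (swapZ2 G) (swapZ2 G).subtype

/-- The element `σ` of `G(2)`. -/
def sigmaW (G : Type*) [Group G] : Gtwo G :=
  ⟨1, ⟨swapAut G, Subgroup.mem_zpowers _⟩⟩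

open Classical in
/-- The embedding of `G` into `G(2)` determined by `G0` and `τ'`:
`g ↦ ((g, τ'gτ'⁻¹), 1)` for `g ∈ G0`, and `τ' ↦ σ·((τ'², 1), 1)`. -/
noncomputable def iota {G : Type*} [Group G] (G0 : Subgroup G) (τ' : G) (g : G) : Gtwo G :=
  if g ∈ G0 then ⟨(g, τ' * g * τ'⁻¹), 1⟩
  else ⟨(g * τ', τ' * g * τ'⁻¹ * τ'⁻¹), ⟨swapAut G, Subgroup.mem_zpowers _⟩⟩

lemma swapAut_sq (G : Type*) [Group G] : swapAut G ^ 2 = 1 := by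
  rw [sq]; ext x <;> rfl

lemma swapZ2_cases {G : Type*} [Group G] (s : swapZ2 G) :
    (s : MulAut (G × G)) = 1 ∨ (s : MulAut (G × G)) = swapAut G := by
  obtain ⟨u, hu⟩ := s
  obtain ⟨k, rfl⟩ := Subgroup.mem_zpowers_iff.mp hu
  have h2 : swapAut G ^ (2 : ℤ) = 1 := by
    rw [show (2 : ℤ) = ((2 : ℕ) : ℤ) from rfl, zpow_natCast, swapAut_sq]
  rcases Int.even_or_odd k with ⟨m, rfl⟩ | ⟨m, rfl⟩
  · left
    show swapAut G ^ (m + m) = 1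
    rw [← two_mul, zpow_mul, h2, one_zpow]
  · right
    show swapAut G ^ (2 * m + 1) = swapAut G
    rw [zpow_add, zpow_mul, h2, one_zpow, one_mul, zpow_one]

/-- The subgroup `(G⁰ × G⁰) ⋊ ℤ/2ℤ` of `G(2)`. -/
def G0two {G : Type*} [Group G] (G0 : Subgroup G) : Subgroup (Gtwo G) where
  carrier := {x | x.left.1 ∈ G0 ∧ x.left.2 ∈ G0}
  one_mem' := ⟨G0.one_mem, G0.one_mem⟩
  mul_mem' := by
    rintro x y ⟨hx1, hx2⟩ ⟨hy1, hy2⟩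
    have h : (x * y).left = x.left * (x.right : MulAut (G × G)) y.left := rfl
    rcases swapZ2_cases x.right with hs | hs <;>
      · show ((x*y).left).1 ∈ G0 ∧ ((x*y).left).2 ∈ G0
        rw [h, hs]
        first
        | exact ⟨G0.mul_mem hx1 hy1, G0.mul_mem hx2 hy2⟩
        | exact ⟨G0.mul_mem hx1 hy2, G0.mul_mem hx2 hy1⟩
  inv_mem' := by
    rintro x ⟨hx1, hx2⟩
    have h : (x⁻¹).left = ((x.right⁻¹ : swapZ2 G) : MulAut (G × G)) x.left⁻¹ := rfl
    rcases swapZ2_cases x.right⁻¹ with hs | hs <;>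
      · show ((x⁻¹).left).1 ∈ G0 ∧ ((x⁻¹).left).2 ∈ G0
        rw [h, hs]
        first
        | exact ⟨G0.inv_mem hx1, G0.inv_mem hx2⟩
        | exact ⟨G0.inv_mem hx2, G0.inv_mem hx1⟩

/-- The set `G⁰_K = {(g,h) ∈ G⁰ × G⁰ : h·(τ'gτ'⁻¹)⁻¹ ∈ K}`, seen inside `G(2)`. -/
def G0Kset {G : Type*} [Group G] (G0 : Subgroup G) (τ' : G) (K : Subgroup G) :
    Set (Gtwo G) :=
  {x | x.right = 1 ∧ x.left.1 ∈ G0 ∧ x.left.2 ∈ G0 ∧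
    x.left.2 * (τ' * x.left.1 * τ'⁻¹)⁻¹ ∈ K}

/-- The set `G_K = G⁰_K ∪ τ'·G⁰_K` inside `G(2)`. -/
noncomputable def GKset {G : Type*} [Group G] (G0 : Subgroup G) (τ' : G) (K : Subgroup G) :
    Set (Gtwo G) :=
  G0Kset G0 τ' K ∪ (fun x => iota G0 τ' τ' * x) '' G0Kset G0 τ' K

/-- with `G⁰` acting freely on `C`, and `K ≤ G⁰` normal in `G` containing
the elements of `G⁰` with fixed points, the commutators, `τ = (τ')²` and all `g·Ad_{τ'}(g)`,
every element of `G⁰(2)` fixing a point of `C × C` lies in `G_K`; in particular any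
`(g,h) ∈ G⁰ × G⁰` with a fixed point is trivial, and any `τ'(g,h)` with a fixed point
lies in `G_K`. -/
theorem statement13 {G : Type*} [Group G] [Finite G] {C : Type*} [MulAction G C]
    (G0 : Subgroup G) (hind : G0.index = 2) (τ' : G) (hτ : τ' ∉ G0)
    (hfree : ∀ g ∈ G0, ∀ x : C, g • x = x → g = 1)
    [MulAction (Gtwo G) (C × C)]
    (hact : ∀ (a b : G) (x y : C),
      (⟨(a, b), 1⟩ : Gtwo G) • ((x, y) : C × C) = (a • x, b • y))
    (hσ : ∀ x y : C, sigmaW G • ((x, y) : C × C) = (y, x))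
    (K : Subgroup G) (hKle : K ≤ G0) (hKn : K.Normal)
    (hSig : ∀ g ∈ G0, (∃ x : C, g • x = x) → g ∈ K)
    (hcomm : ∀ a ∈ G0, ∀ b ∈ G0, a * b * a⁻¹ * b⁻¹ ∈ K)
    (hinv : ∀ g ∈ G0, g * (τ' * g * τ'⁻¹) ∈ K)
    (hτ2 : τ' ^ 2 ∈ K) :
    (∀ w : Gtwo G, w.left.1 ∈ G0 → w.left.2 ∈ G0 →
      (∃ pt : C × C, w • pt = pt) → w ∈ GKset G0 τ' K) ∧
    (∀ a b : G, a ∈ G0 → b ∈ G0 →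
      (∃ pt : C × C, (⟨(a, b), 1⟩ : Gtwo G) • pt = pt) → a = 1 ∧ b = 1) ∧
    (∀ a b : G, a ∈ G0 → b ∈ G0 →
      (∃ pt : C × C, (iota G0 τ' τ' * (⟨(a, b), 1⟩ : Gtwo G)) • pt = pt) →
      iota G0 τ' τ' * (⟨(a, b), 1⟩ : Gtwo G) ∈ GKset G0 τ' K) := by
  haveI := hKn
  set σe : swapZ2 G := ⟨swapAut G, Subgroup.mem_zpowers _⟩ with hσe
  have hiota : iota G0 τ' τ' = ⟨(τ' * τ', τ' * τ' * τ'⁻¹ * τ'⁻¹), σe⟩ := by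
    simp [iota, hτ, hσe]
  have hswap : ∀ p : G × G, (swapAut G) p = (p.2, p.1) := fun p => rfl
  have hτ2' : (τ' * τ' : G) ∈ K := by rw [← sq]; exact hτ2
  have hτinv : (τ'⁻¹ * τ'⁻¹ : G) ∈ G0 := by
    have h := G0.inv_mem (hKle hτ2')
    rwa [mul_inv_rev] at h
  -- quotient computation
  have key : ∀ a b : G, b ∈ G0 → a * b ∈ K →
      τ'⁻¹ * τ'⁻¹ * a * (τ' * b * τ'⁻¹)⁻¹ ∈ K := by
    intro a b hb hab
    rw [← QuotientGroup.eq_one_iff]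
    have e1 : ((a * b : G) : G ⧸ K) = 1 := (QuotientGroup.eq_one_iff _).mpr hab
    have e2 : ((τ' * τ' : G) : G ⧸ K) = 1 := (QuotientGroup.eq_one_iff _).mpr hτ2'
    have e3 : ((b * (τ' * b * τ'⁻¹) : G) : G ⧸ K) = 1 :=
      (QuotientGroup.eq_one_iff _).mpr (hinv b hb)
    set A : G ⧸ K := ((a : G) : G ⧸ K) with hA
    set B : G ⧸ K := ((b : G) : G ⧸ K) with hB
    set T : G ⧸ K := ((τ' : G) : G ⧸ K) with hT
    have e1' : A * B = 1 := by rw [hA, hB, ← QuotientGroup.mk_mul]; exact e1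
    have e2' : T * T = 1 := by rw [hT, ← QuotientGroup.mk_mul]; exact e2
    have e3' : B * (T * B * T⁻¹) = 1 := by
      rw [hB, hT, ← QuotientGroup.mk_inv, ← QuotientGroup.mk_mul,
        ← QuotientGroup.mk_mul, ← QuotientGroup.mk_mul]
      exact e3
    have e4 : T * B⁻¹ * T⁻¹ = B := by
      have h5 : T * B * T⁻¹ = B⁻¹ := by
        calc T * B * T⁻¹ = B⁻¹ * (B * (T * B * T⁻¹)) := by group
          _ = B⁻¹ := by rw [e3']; group
      calc T * B⁻¹ * T⁻¹ = (T * B * T⁻¹)⁻¹ := by group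
        _ = B := by rw [h5]; group
    have goal : ((τ'⁻¹ * τ'⁻¹ * a * (τ' * b * τ'⁻¹)⁻¹ : G) : G ⧸ K)
        = T⁻¹ * T⁻¹ * A * (T * B * T⁻¹)⁻¹ := by
      rw [hA, hB, hT]
      push_cast
      rfl
    rw [goal]
    calc T⁻¹ * T⁻¹ * A * (T * B * T⁻¹)⁻¹
        = (T * T)⁻¹ * (A * (T * B⁻¹ * T⁻¹)) := by group
      _ = 1 := by rw [e2', e4, e1']; group
  have main : ∀ w : Gtwo G, w.left.1 ∈ G0 → w.left.2 ∈ G0 →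
      (∃ pt : C × C, w • pt = pt) → w ∈ GKset G0 τ' K := by
    rintro ⟨⟨a, b⟩, r⟩ h1 h2 ⟨⟨x, y⟩, hpt⟩
    simp only at h1 h2
    rcases swapZ2_cases r with hs | hs
    · -- right = 1
      have hr : r = 1 := Subtype.ext hs
      subst hr
      rw [hact] at hpt
      have ha1 : a = 1 := hfree _ h1 x (congrArg Prod.fst hpt)
      have hb1 : b = 1 := hfree _ h2 y (congrArg Prod.snd hpt)
      subst ha1; subst hb1
      left
      refine ⟨rfl, h1, h2, ?_⟩
      show (1 : G) * (τ' * 1 * τ'⁻¹)⁻¹ ∈ K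
      simpa using K.one_mem
    · -- right = σ
      have hr : r = σe := Subtype.ext hs
      subst hr
      have hw : (⟨(a, b), σe⟩ : Gtwo G) = (⟨(a, b), 1⟩ : Gtwo G) * sigmaW G := by
        refine SemidirectProduct.ext ?_ ?_
        · show (a, b) = (a, b) * ((1 : swapZ2 G) : MulAut (G × G)) (1 : G × G)
          simp
        · show σe = 1 * σe
          rw [one_mul]
      rw [hw, mul_smul, hσ, hact] at hpt
      have hx : a • y = x := congrArg Prod.fst hpt
      have hy : b • x = y := congrArg Prod.snd hpt
      have hfix : (a * b) • x = x := by rw [mul_smul, hy, hx]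
      have habK : a * b ∈ K := hSig _ (G0.mul_mem h1 h2) ⟨x, hfix⟩
      right
      refine ⟨⟨(b, τ'⁻¹ * τ'⁻¹ * a), 1⟩, ⟨rfl, h2, G0.mul_mem hτinv h1, ?_⟩, ?_⟩
      · exact key a b h2 habK
      · rw [hiota]
        refine SemidirectProduct.ext ?_ ?_
        · show (τ' * τ', τ' * τ' * τ'⁻¹ * τ'⁻¹) * (swapAut G) (b, τ'⁻¹ * τ'⁻¹ * a) = (a, b)
          rw [hswap]
          refine Prod.ext ?_ ?_
          · show τ' * τ' * (τ'⁻¹ * τ'⁻¹ * a) = a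
            group
          · show τ' * τ' * τ'⁻¹ * τ'⁻¹ * b = b
            group
        · show σe * 1 = σe
          rw [mul_one]
  refine ⟨main, ?_, ?_⟩
  · rintro a b ha hb ⟨⟨x, y⟩, hpt⟩
    rw [hact] at hpt
    exact ⟨hfree a ha x (congrArg Prod.fst hpt), hfree b hb y (congrArg Prod.snd hpt)⟩
  · intro a b ha hb hpt
    apply main
    · show ((iota G0 τ' τ' * ⟨(a, b), 1⟩ : Gtwo G).left).1 ∈ G0
      rw [hiota, SemidirectProduct.mul_left]
      show ((τ' * τ', τ' * τ' * τ'⁻¹ * τ'⁻¹) * (swapAut G) (a, b)).1 ∈ G0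
      rw [hswap]
      exact G0.mul_mem (hKle hτ2') hb
    · show ((iota G0 τ' τ' * ⟨(a, b), 1⟩ : Gtwo G).left).2 ∈ G0
      rw [hiota, SemidirectProduct.mul_left]
      show ((τ' * τ', τ' * τ' * τ'⁻¹ * τ'⁻¹) * (swapAut G) (a, b)).2 ∈ G0
      rw [hswap]
      show (τ' * τ' * τ'⁻¹ * τ'⁻¹ * a : G) ∈ G0
      have : (τ' * τ' * τ'⁻¹ * τ'⁻¹ * a : G) = a := by group
      rwa [this]
    · exact hpt
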